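/- If a is a bounded coercive Hermitian form on a complex Hilbert space H, R ⊆ H a closed subspace, S its a-orthogonal complement, u ∈ H the unique solution of a(u, v) = ℓ(v) for all v ∈ H (ℓ a bounded linear functional), and u = u_R + C s for a fixed nonzero s ∈ S with u_R ∈ R, then the pair (u_R, C) is the unique solution of the coupled system: a(u_R, v) + C a(s, v) = ℓ(v) for all v ∈ R, and a(u_R, s) + C a(s, s) = ℓ(s); moreover a(u_R, s) = 0 and C = ℓ(s)/a(s,s). -/

import Mathlib

open ComplexConjugate

/-- Abstract Singular Complement Method coupled system: `a` bounded coercive Hermitian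
on a complex Hilbert space `H`, `R` a closed subspace, `S` its `a`-orthogonal complement
spanned by the single nonzero element `s`, `u` the solution of `a(u,v) = ℓ(v)` for all
`v`, decomposed as `u = u_R + C • s` with `u_R ∈ R`.  Then `(u_R, C)` is the unique
solution of the coupled system `a(u_R,v) + C a(s,v) = ℓ(v)` (`v ∈ R`) and
`a(u_R,s) + C a(s,s) = ℓ(s)`; moreover `a(u_R,s) = 0` and `C = ℓ(s)/a(s,s)`. -/
theorem scm_coupled_system
    {H : Type*} [NormedAddCommGroup H] [InnerProductSpace ℂ H] [CompleteSpace H]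
    (a : H → H → ℂ)
    (hadd₁ : ∀ x x' y, a (x + x') y = a x y + a x' y)
    (hadd₂ : ∀ x y y', a x (y + y') = a x y + a x y')
    (hsmul₁ : ∀ (c : ℂ) x y, a (c • x) y = c * a x y)
    (hsmul₂ : ∀ (c : ℂ) x y, a x (c • y) = conj c * a x y)
    (hherm : ∀ x y, a x y = conj (a y x))
    (Mb : ℝ) (hbound : ∀ x y, ‖a x y‖ ≤ Mb * ‖x‖ * ‖y‖)
    (cc : ℝ) (hcc : 0 < cc) (hcoer : ∀ x, cc * ‖x‖ ^ 2 ≤ (a x x).re)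
    (R : Submodule ℂ H) (hR : IsClosed (R : Set H))
    (s : H) (hs0 : s ≠ 0)
    -- s lies in the a-orthogonal complement S of R, and spans it
    (hsS : ∀ v ∈ R, a s v = 0)
    (hspan : ∀ t : H, (∀ v ∈ R, a t v = 0) → ∃ c : ℂ, t = c • s)
    (ℓ : H → ℂ) (u uR : H) (C : ℂ)
    (hu : ∀ v, a u v = ℓ v)
    (hdec : u = uR + C • s) (huR : uR ∈ R) :
    ((∀ v ∈ R, a uR v + C * a s v = ℓ v) ∧ (a uR s + C * a s s = ℓ s)) ∧
    a uR s = 0 ∧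
    C = ℓ s / a s s ∧
    (∀ uR' : H, ∀ C' : ℂ, uR' ∈ R →
      (∀ v ∈ R, a uR' v + C' * a s v = ℓ v) → (a uR' s + C' * a s s = ℓ s) →
      uR' = uR ∧ C' = C) := by

  have key : ∀ v, a uR v + C * a s v = ℓ v := fun v => by
    rw [← hu v, hdec, hadd₁, hsmul₁]
  have hsspos : (0:ℝ) < (a s s).re :=
    lt_of_lt_of_le (mul_pos hcc (pow_pos (norm_pos_iff.mpr hs0) 2)) (hcoer s)
  have hass : a s s ≠ 0 := fun h => by simp [h] at hsspos
  have hors : a uR s = 0 := by rw [hherm, hsS uR huR]; simp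
  have hCeq : C * a s s = ℓ s := by have := key s; rwa [hors, zero_add] at this
  have hsub₁ : ∀ x y v, a (x - y) v = a x v - a y v := fun x y v => by
    rw [sub_eq_add_neg, ← neg_one_smul ℂ y, hadd₁, hsmul₁]; ring
  refine ⟨⟨fun v _ => key v, key s⟩, hors, ?_, ?_⟩
  · field_simp [hass, ← hCeq]; exact hCeq
  · intro uR' C' huR' h1' h2'
    have hors' : a uR' s = 0 := by rw [hherm, hsS uR' huR']; simp
    have hC' : C' * a s s = ℓ s := by rwa [hors', zero_add] at h2'
    have hCC : C' = C := mul_right_cancel₀ hass (by rw [hC', hCeq])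
    have hrv : ∀ v ∈ R, a (uR' - uR) v = 0 := fun v hv => by
      have h1 := h1' v hv
      have h2 := key v
      rw [hsS v hv, mul_zero, add_zero] at h1 h2
      rw [hsub₁, h1, h2, sub_self]
    have hrr : a (uR' - uR) (uR' - uR) = 0 := hrv _ (R.sub_mem huR' huR)
    have hnorm : cc * ‖uR' - uR‖ ^ 2 ≤ 0 := by
      have := hcoer (uR' - uR); rwa [hrr] at this
    have : uR' - uR = 0 := by
      by_contra h
      have : (0:ℝ) < cc * ‖uR' - uR‖ ^ 2 :=
        mul_pos hcc (pow_pos (norm_pos_iff.mpr h) 2)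
      linarith
    exact ⟨sub_eq_zero.mp this, hCC⟩
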